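/- Let P, Q be probability measures on ℝ with quantile functions F_P^←, F_Q^←. Then inf over all couplings π of P and Q of ∫ (u−v)²/2 dπ(u,v) equals ∫₀¹ (F_P^←(x) − F_Q^←(x))²/2 dx. -/

import Mathlib

open MeasureTheory Set ENNReal

/-- Cumulative distribution function of a measure on `ℝ`. -/
noncomputable def cdf (P : Measure ℝ) (z : ℝ) : ℝ := (P (Iic z)).toReal

/-- Quantile function (generalized inverse of the cdf). -/
noncomputable def quantile (P : Measure ℝ) (x : ℝ) : ℝ := sInf {z : ℝ | x ≤ cdf P z}

section cdfquantile

variable (P : Measure ℝ) [IsProbabilityMeasure P]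

lemma cdf_nonneg (z : ℝ) : 0 ≤ cdf P z := ENNReal.toReal_nonneg

lemma ofReal_cdf (z : ℝ) : ENNReal.ofReal (cdf P z) = P (Iic z) :=
  ENNReal.ofReal_toReal (measure_ne_top _ _)

lemma cdf_mono : Monotone (cdf P) := fun a b hab =>
  ENNReal.toReal_mono (measure_ne_top _ _) (measure_mono (Iic_subset_Iic.2 hab))

lemma le_cdf_iff {x z : ℝ} : x ≤ cdf P z ↔ ENNReal.ofReal x ≤ P (Iic z) := by
  rw [← ofReal_cdf P z]
  constructor
  · exact fun h => ENNReal.ofReal_le_ofReal h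
  · intro h
    rcases le_total x 0 with h0 | h0
    · exact h0.trans (cdf_nonneg P z)
    · have := ENNReal.toReal_mono (by simp [ofReal_cdf]) h
      rwa [ENNReal.toReal_ofReal h0, ENNReal.toReal_ofReal (cdf_nonneg P z)] at this

lemma exists_le_cdf {x : ℝ} (hx : x < 1) : ∃ z : ℝ, x ≤ cdf P z := by
  have hU : (⋃ n : ℕ, Iic (n : ℝ)) = univ := by
    ext y; simp only [mem_iUnion, mem_Iic, mem_univ, iff_true]
    exact exists_nat_ge y
  have hd : Directed (· ⊆ ·) (fun n : ℕ => Iic (n : ℝ)) :=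
    (monotone_nat_of_le_succ fun n => Iic_subset_Iic.2 (by exact_mod_cast Nat.le_succ n)).directed_le
  have h1 : (⨆ n : ℕ, P (Iic (n : ℝ))) = 1 := by
    rw [← hd.measure_iUnion, hU, measure_univ]
  have hlt : ENNReal.ofReal x < ⨆ n : ℕ, P (Iic (n : ℝ)) := by
    rw [h1]; exact_mod_cast ENNReal.ofReal_lt_one.2 hx
  obtain ⟨n, hn⟩ := lt_iSup_iff.1 hlt
  exact ⟨n, (le_cdf_iff P).2 hn.le⟩

lemma exists_cdf_lt {x : ℝ} (hx : 0 < x) : ∃ z : ℝ, cdf P z < x := by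
  have hI : (⋂ n : ℕ, Iic (-(n : ℝ))) = ∅ := by
    ext y; simp only [mem_iInter, mem_Iic, mem_empty_iff_false, iff_false, not_forall, not_le]
    obtain ⟨n, hn⟩ := exists_nat_gt (-y)
    exact ⟨n, by linarith⟩
  have hd : Directed (· ⊇ ·) (fun n : ℕ => Iic (-(n : ℝ))) := by
    apply Antitone.directed_ge
    exact antitone_nat_of_succ_le fun n => Iic_subset_Iic.2 (by push_cast; linarith)
  have h0 : (⨅ n : ℕ, P (Iic (-(n : ℝ)))) = 0 := by
    rw [← Directed.measure_iInter (fun n => (measurableSet_Iic).nullMeasurableSet) hd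
      ⟨0, measure_ne_top _ _⟩, hI, measure_empty]
  have hlt : ⨅ n : ℕ, P (Iic (-(n : ℝ))) < ENNReal.ofReal x := by
    rw [h0]; exact ENNReal.ofReal_pos.2 hx
  obtain ⟨n, hn⟩ := iInf_lt_iff.1 hlt
  refine ⟨-(n : ℝ), ?_⟩
  by_contra h
  exact absurd ((le_cdf_iff P).1 (not_lt.1 h)) (not_le.2 hn)

variable {P}

lemma quantileSet_nonempty {x : ℝ} (hx : x < 1) : {z : ℝ | x ≤ cdf P z}.Nonempty :=
  exists_le_cdf P hx

lemma quantileSet_bddBelow {x : ℝ} (hx : 0 < x) : BddBelow {z : ℝ | x ≤ cdf P z} := by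
  obtain ⟨z₀, hz₀⟩ := exists_cdf_lt P hx
  refine ⟨z₀, fun z hz => ?_⟩
  by_contra h
  exact absurd (hz.trans (cdf_mono P (not_le.1 h).le)) (not_le.2 hz₀)

lemma le_cdf_quantile {x : ℝ} (hx0 : 0 < x) (hx1 : x < 1) : x ≤ cdf P (quantile P x) := by
  set S := {z : ℝ | x ≤ cdf P z} with hS
  have hne := quantileSet_nonempty (P := P) hx1
  have hbdd := quantileSet_bddBelow (P := P) hx0
  have hmem : ∀ n : ℕ, quantile P x + 1/(n+1) ∈ S := by
    intro n
    obtain ⟨z, hzS, hz⟩ := Real.lt_sInf_add_pos hne (by positivity : (0:ℝ) < 1/(n+1))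
    exact le_trans hzS (cdf_mono P (by rw [quantile]; linarith))
  rw [le_cdf_iff]
  have hInter : (⋂ n : ℕ, Iic (quantile P x + 1/(n+1))) = Iic (quantile P x) := by
    ext y
    simp only [mem_iInter, mem_Iic]
    constructor
    · intro h
      by_contra hy
      obtain ⟨n, hn⟩ := exists_nat_one_div_lt (sub_pos.2 (not_le.1 hy))
      have := h n; linarith
    · intro h n
      have hp : (0:ℝ) < 1/(n+1) := by positivity
      linarith
  have hd : Directed (· ⊇ ·) (fun n : ℕ => Iic (quantile P x + 1/(n+1))) := by
    apply Antitone.directed_ge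
    apply antitone_nat_of_succ_le
    intro n
    apply Iic_subset_Iic.2
    have : (1:ℝ)/(n+1+1) ≤ 1/(n+1) :=
      one_div_le_one_div_of_le (by positivity) (by linarith)
    push_cast; linarith
  have := Directed.measure_iInter (μ := P)
    (fun n : ℕ => (measurableSet_Iic (a := quantile P x + 1/(n+1))).nullMeasurableSet) hd
    ⟨0, measure_ne_top _ _⟩
  rw [hInter] at this
  rw [this]
  exact le_iInf fun n => (le_cdf_iff P).1 (hmem n)

lemma quantile_le_iff {x z : ℝ} (hx0 : 0 < x) (hx1 : x < 1) :
    quantile P x ≤ z ↔ x ≤ cdf P z := by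
  constructor
  · intro h
    exact (le_cdf_quantile hx0 hx1).trans (cdf_mono P h)
  · intro h
    exact csInf_le (quantileSet_bddBelow hx0) h

lemma monotoneOn_quantile : MonotoneOn (quantile P) (Ioo (0:ℝ) 1) := by
  intro a ha b hb hab
  apply le_csInf (quantileSet_nonempty hb.2)
  intro z hz
  exact csInf_le (quantileSet_bddBelow ha.1) (hab.trans hz)

lemma measure_Iio_le_of_le_quantile {x t : ℝ} (hx0 : 0 < x) (hx1 : x < 1)
    (h : t ≤ quantile P x) : P (Iio t) ≤ ENNReal.ofReal x := by
  have hU : (⋃ n : ℕ, Iic (t - 1/(n+1))) = Iio t := by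
    ext y
    simp only [mem_iUnion, mem_Iic, mem_Iio]
    constructor
    · rintro ⟨n, hn⟩
      have hp : (0:ℝ) < 1/(n+1) := by positivity
      linarith
    · intro hy
      obtain ⟨n, hn⟩ := exists_nat_one_div_lt (sub_pos.2 hy)
      exact ⟨n, by linarith⟩
  have hd : Directed (· ⊆ ·) (fun n : ℕ => Iic (t - 1/(n+1))) := by
    apply Monotone.directed_le
    apply monotone_nat_of_le_succ
    intro n
    apply Iic_subset_Iic.2
    have : (1:ℝ)/(n+1+1) ≤ 1/(n+1) :=
      one_div_le_one_div_of_le (by positivity) (by linarith)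
    push_cast; linarith
  rw [← hU, hd.measure_iUnion]
  apply iSup_le
  intro n
  by_contra hc
  have hx' : x ≤ cdf P (t - 1/(n+1)) := by
    rw [le_cdf_iff]; exact (not_le.1 hc).le
  have := (quantile_le_iff hx0 hx1).2 hx'
  have hpos : (0:ℝ) < 1/(n+1) := by positivity
  linarith

lemma quantile_mem_le {x s : ℝ} (hx : x ∈ Ioo (0:ℝ) 1) (h : quantile P x ≤ s) :
    x ≤ cdf P s := (quantile_le_iff hx.1 hx.2).1 h

end cdfquantile
section part2
open MeasureTheory Set ENNReal

noncomputable def unif : Measure ℝ := volume.restrict (Ioo (0:ℝ) 1)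

instance : IsProbabilityMeasure unif :=
  ⟨by rw [unif, Measure.restrict_apply MeasurableSet.univ, univ_inter, Real.volume_Ioo]; norm_num⟩

variable (P : Measure ℝ) [IsProbabilityMeasure P]

lemma aemeasurable_quantile : AEMeasurable (quantile P) unif :=
  aemeasurable_restrict_of_monotoneOn measurableSet_Ioo monotoneOn_quantile

lemma unif_map_quantile : unif.map (quantile P) = P := by
  have hq := aemeasurable_quantile P
  have : IsProbabilityMeasure (unif.map (quantile P)) := Measure.isProbabilityMeasure_map hq
  apply Measure.ext_of_Iic
  intro z
  rw [Measure.map_apply_of_aemeasurable hq measurableSet_Iic, unif,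
    Measure.restrict_apply' measurableSet_Ioo]
  have hset : quantile P ⁻¹' Iic z ∩ Ioo 0 1 = Iic (cdf P z) ∩ Ioo 0 1 := by
    ext x
    simp only [mem_inter_iff, mem_preimage, mem_Iic, mem_Ioo, and_congr_left_iff]
    intro hx
    exact quantile_le_iff hx.1 hx.2
  rw [hset, ← ofReal_cdf P z]
  have h0 : 0 ≤ cdf P z := cdf_nonneg P z
  have h1 : cdf P z ≤ 1 := by
    have := measure_mono (μ := P) (subset_univ (Iic z))
    rw [measure_univ] at this
    rw [cdf]
    exact ENNReal.toReal_le_of_le_ofReal one_pos.le (by simpa using this)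
  rcases lt_or_eq_of_le h1 with h1' | h1'
  · have : Iic (cdf P z) ∩ Ioo (0:ℝ) 1 = Ioc 0 (cdf P z) := by
      ext x
      simp only [mem_inter_iff, mem_Iic, mem_Ioo, mem_Ioc]
      constructor
      · rintro ⟨h, h2, h3⟩; exact ⟨h2, h⟩
      · rintro ⟨h2, h⟩; exact ⟨h, h2, lt_of_le_of_lt h h1'⟩
    rw [this, Real.volume_Ioc, sub_zero]
  · have : Iic (cdf P z) ∩ Ioo (0:ℝ) 1 = Ioo 0 1 := by
      apply inter_eq_right.2
      intro x hx
      simp only [mem_Iic]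
      rw [h1']
      exact hx.2.le
    rw [this, Real.volume_Ioo, h1']
    norm_num

lemma volume_triangle {a b : ℝ} (hab : a ≤ b) :
    (volume : Measure (ℝ × ℝ)) {p : ℝ × ℝ | a ≤ p.1 ∧ p.1 < p.2 ∧ p.2 ≤ b}
      = ENNReal.ofReal ((b - a)^2 / 2) := by
  have hT : MeasurableSet {p : ℝ × ℝ | a ≤ p.1 ∧ p.1 < p.2 ∧ p.2 ≤ b} := by
    apply MeasurableSet.inter
    · exact measurable_fst measurableSet_Ici
    · exact (measurableSet_lt measurable_fst measurable_snd).inter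
        (measurable_snd measurableSet_Iic)
  rw [Measure.volume_eq_prod, Measure.prod_apply hT]
  have hpre : ∀ s : ℝ, (Prod.mk s ⁻¹' {p : ℝ × ℝ | a ≤ p.1 ∧ p.1 < p.2 ∧ p.2 ≤ b})
      = if a ≤ s then Ioc s b else ∅ := by
    intro s
    ext t
    by_cases h : a ≤ s <;> simp [h, mem_Ioc, and_comm]
  have heq : (∫⁻ s, volume (Prod.mk s ⁻¹' {p : ℝ × ℝ | a ≤ p.1 ∧ p.1 < p.2 ∧ p.2 ≤ b}))
      = ∫⁻ s, (Ici a).indicator (fun s => ENNReal.ofReal (b - s)) s := by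
    apply lintegral_congr
    intro s
    rw [hpre s]
    by_cases h : a ≤ s
    · simp [h, Real.volume_Ioc, indicator_of_mem (mem_Ici.2 h)]
    · simp [h, indicator_of_notMem (fun hc => h (mem_Ici.1 hc))]
  rw [heq, lintegral_indicator measurableSet_Ici]
  have hsplit : (Ici a : Set ℝ) = Icc a b ∪ Ioi b := by
    ext s
    simp only [mem_Ici, mem_union, mem_Icc, mem_Ioi]
    constructor
    · intro h
      rcases le_or_gt s b with h' | h'
      · exact Or.inl ⟨h, h'⟩
      · exact Or.inr h'
    · rintro (⟨h, _⟩ | h)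
      · exact h
      · linarith
  rw [hsplit, lintegral_union measurableSet_Ioi (by
    rw [Set.disjoint_left]; intro s hs hs'; exact absurd (mem_Ioi.1 hs') (not_lt.2 (mem_Icc.1 hs).2))]
  have hzero : ∫⁻ s in Ioi b, ENNReal.ofReal (b - s) = 0 := by
    have h0 : ∫⁻ s in Ioi b, ENNReal.ofReal (b - s) = ∫⁻ s in Ioi b, (0:ℝ≥0∞) := by
      apply setLIntegral_congr_fun measurableSet_Ioi
      intro s hs
      rw [ENNReal.ofReal_eq_zero]
      simp only [mem_Ioi] at hs
      linarith
    rw [h0, lintegral_zero]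
  rw [hzero, add_zero]
  have hint : ∫⁻ s in Icc a b, ENNReal.ofReal (b - s)
      = ENNReal.ofReal (∫ s in Icc a b, (b - s)) := by
    rw [← ofReal_integral_eq_lintegral_ofReal]
    · exact ((continuous_const.sub continuous_id).integrableOn_Icc)
    · filter_upwards [ae_restrict_mem measurableSet_Icc] with s hs
      simp only [Pi.zero_apply]
      linarith [hs.2]
  rw [hint]
  congr 1
  rw [MeasureTheory.integral_Icc_eq_integral_Ioc, ← intervalIntegral.integral_of_le hab]
  rw [intervalIntegral.integral_sub intervalIntegrable_const intervalIntegral.intervalIntegrable_id]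
  rw [intervalIntegral.integral_const, integral_id]
  simp only [smul_eq_mul]
  ring

lemma cost_eq_volume (u v : ℝ) :
    ENNReal.ofReal ((u - v)^2 / 2)
      = (volume : Measure (ℝ × ℝ)) {p : ℝ × ℝ | min u v ≤ p.1 ∧ p.1 < p.2 ∧ p.2 ≤ max u v} := by
  rw [volume_triangle (min_le_max (a := u) (b := v))]
  congr 1
  rcases le_total u v with h | h
  · rw [min_eq_left h, max_eq_right h]
    ring
  · rw [min_eq_right h, max_eq_left h]

end part2
section part3
open MeasureTheory Set ENNReal Function

/-- The "big set" in `(ℝ×ℝ) × (ℝ×ℝ)` used for the layer-cake representation. -/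
def bigSet : Set ((ℝ × ℝ) × (ℝ × ℝ)) :=
  {r | min r.1.1 r.1.2 ≤ r.2.1 ∧ r.2.1 < r.2.2 ∧ r.2.2 ≤ max r.1.1 r.1.2}

lemma measurable_bigSet : MeasurableSet bigSet := by
  apply MeasurableSet.inter
  · exact measurableSet_le ((measurable_fst.fst).min (measurable_fst.snd)) (measurable_snd.fst)
  · exact (measurableSet_lt measurable_snd.fst measurable_snd.snd).inter
      (measurableSet_le measurable_snd.snd ((measurable_fst.fst).max (measurable_fst.snd)))

/-- Slice of the big set at a point `q` of the second factor. -/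
def sliceSet (q : ℝ × ℝ) : Set (ℝ × ℝ) :=
  {p | min p.1 p.2 ≤ q.1 ∧ q.1 < q.2 ∧ q.2 ≤ max p.1 p.2}

lemma measurable_sliceSet (q : ℝ × ℝ) : MeasurableSet (sliceSet q) := by
  have : sliceSet q = (fun p : ℝ × ℝ => (p, q)) ⁻¹' bigSet := rfl
  rw [this]
  exact (measurable_id.prodMk measurable_const) measurable_bigSet

lemma lintegral_cost (ν : Measure (ℝ × ℝ)) [IsProbabilityMeasure ν] :
    ∫⁻ p, ENNReal.ofReal ((p.1 - p.2)^2 / 2) ∂ν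
      = ∫⁻ q, ν (sliceSet q) ∂(volume : Measure (ℝ × ℝ)) := by
  have hind : Measurable (bigSet.indicator (1 : ((ℝ × ℝ) × (ℝ × ℝ)) → ℝ≥0∞)) :=
    measurable_const.indicator measurable_bigSet
  have step1 : ∫⁻ p, ENNReal.ofReal ((p.1 - p.2)^2 / 2) ∂ν
      = ∫⁻ p, ∫⁻ q, bigSet.indicator 1 (p, q) ∂(volume : Measure (ℝ × ℝ)) ∂ν := by
    apply lintegral_congr
    intro p
    rw [cost_eq_volume p.1 p.2]
    have : (fun q : ℝ × ℝ => bigSet.indicator 1 (p, q))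
        = (Prod.mk p ⁻¹' bigSet).indicator (1 : (ℝ × ℝ) → ℝ≥0∞) := by
      ext q
      by_cases h : (p, q) ∈ bigSet <;>
        simp [Set.indicator_apply, h, mem_preimage]
    simp only [this]
    rw [lintegral_indicator_one (measurable_prodMk_left measurable_bigSet)]
    rfl
  have step2 : ∫⁻ p, ∫⁻ q, bigSet.indicator 1 (p, q) ∂(volume : Measure (ℝ × ℝ)) ∂ν
      = ∫⁻ q, ∫⁻ p, bigSet.indicator 1 (p, q) ∂ν ∂(volume : Measure (ℝ × ℝ)) := by
    apply lintegral_lintegral_swap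
    exact hind.aemeasurable
  have step3 : ∫⁻ q, ∫⁻ p, bigSet.indicator 1 (p, q) ∂ν ∂(volume : Measure (ℝ × ℝ))
      = ∫⁻ q, ν (sliceSet q) ∂(volume : Measure (ℝ × ℝ)) := by
    apply lintegral_congr
    intro q
    have : (fun p : ℝ × ℝ => bigSet.indicator 1 (p, q))
        = (sliceSet q).indicator (1 : (ℝ × ℝ) → ℝ≥0∞) := by
      ext p
      have hmem : p ∈ sliceSet q ↔ (p, q) ∈ bigSet := Iff.rfl
      by_cases h : (p, q) ∈ bigSet <;>
        simp [Set.indicator_apply, h, hmem]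
    simp only [this]
    exact lintegral_indicator_one (measurable_sliceSet q)
  rw [step1, step2, step3]

lemma minmax_iff {a b s t : ℝ} :
    (min a b ≤ s ∧ t ≤ max a b) ↔ (a ≤ s ∧ t ≤ b) ∨ (b ≤ s ∧ t ≤ a) := by
  rcases le_total a b with h | h
  · rw [min_eq_left h, max_eq_right h]
    constructor
    · exact Or.inl
    · rintro (⟨h1, h2⟩ | ⟨h1, h2⟩)
      exacts [⟨h1, h2⟩, ⟨h.trans h1, h2.trans h⟩]
  · rw [min_eq_right h, max_eq_left h]
    constructor
    · exact Or.inr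
    · rintro (⟨h1, h2⟩ | ⟨h1, h2⟩)
      exacts [⟨h.trans h1, h2.trans h⟩, ⟨h1, h2⟩]

variable {P Q : Measure ℝ} [IsProbabilityMeasure P] [IsProbabilityMeasure Q]

lemma unif_bound (s t : ℝ) :
    unif {x : ℝ | quantile P x ≤ s ∧ t ≤ quantile Q x} ≤ P (Iic s) - Q (Iio t) := by
  rw [unif, Measure.restrict_apply' measurableSet_Ioo]
  have hsub : {x : ℝ | quantile P x ≤ s ∧ t ≤ quantile Q x} ∩ Ioo 0 1
      ⊆ Icc ((Q (Iio t)).toReal) (cdf P s) := by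
    rintro x ⟨⟨h1, h2⟩, hx⟩
    refine ⟨?_, quantile_mem_le hx h1⟩
    exact ENNReal.toReal_le_of_le_ofReal hx.1.le (measure_Iio_le_of_le_quantile hx.1 hx.2 h2)
  calc volume ({x : ℝ | quantile P x ≤ s ∧ t ≤ quantile Q x} ∩ Ioo 0 1)
      ≤ volume (Icc ((Q (Iio t)).toReal) (cdf P s)) := measure_mono hsub
    _ = ENNReal.ofReal (cdf P s - (Q (Iio t)).toReal) := Real.volume_Icc
    _ = ENNReal.ofReal (cdf P s) - ENNReal.ofReal ((Q (Iio t)).toReal) :=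
        ENNReal.ofReal_sub _ ENNReal.toReal_nonneg
    _ = P (Iic s) - Q (Iio t) := by
        rw [ofReal_cdf, ENNReal.ofReal_toReal (measure_ne_top _ _)]

lemma coupling_bound (π : Measure (ℝ × ℝ)) [IsProbabilityMeasure π]
    (hfst : π.map Prod.fst = P) (hsnd : π.map Prod.snd = Q) (s t : ℝ) (hst : s < t) :
    P (Iic s) - Q (Iio t) ≤ π {p : ℝ × ℝ | p.1 ≤ s ∧ t ≤ p.2} := by
  rw [tsub_le_iff_right]
  have hA : P (Iic s) = π (Prod.fst ⁻¹' Iic s) := by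
    rw [← hfst, Measure.map_apply measurable_fst measurableSet_Iic]
  have hB : Q (Iio t) = π (Prod.snd ⁻¹' Iio t) := by
    rw [← hsnd, Measure.map_apply measurable_snd measurableSet_Iio]
  rw [hA, hB]
  calc π (Prod.fst ⁻¹' Iic s)
      ≤ π ((Prod.fst ⁻¹' Iic s) ∩ (Prod.snd ⁻¹' Ici t))
        + π ((Prod.fst ⁻¹' Iic s) \ (Prod.snd ⁻¹' Ici t)) := measure_le_inter_add_diff _ _ _
    _ ≤ π {p : ℝ × ℝ | p.1 ≤ s ∧ t ≤ p.2} + π (Prod.snd ⁻¹' Iio t) := by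
        apply add_le_add
        · apply measure_mono
          rintro p ⟨h1, h2⟩
          exact ⟨h1, h2⟩
        · apply measure_mono
          rintro p ⟨_, h2⟩
          show p.2 < t
          exact lt_of_not_ge fun hc => h2 hc

lemma coupling_bound' (π : Measure (ℝ × ℝ)) [IsProbabilityMeasure π]
    (hfst : π.map Prod.fst = P) (hsnd : π.map Prod.snd = Q) (s t : ℝ) (hst : s < t) :
    Q (Iic s) - P (Iio t) ≤ π {p : ℝ × ℝ | p.2 ≤ s ∧ t ≤ p.1} := by
  rw [tsub_le_iff_right]
  have hA : Q (Iic s) = π (Prod.snd ⁻¹' Iic s) := by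
    rw [← hsnd, Measure.map_apply measurable_snd measurableSet_Iic]
  have hB : P (Iio t) = π (Prod.fst ⁻¹' Iio t) := by
    rw [← hfst, Measure.map_apply measurable_fst measurableSet_Iio]
  rw [hA, hB]
  calc π (Prod.snd ⁻¹' Iic s)
      ≤ π ((Prod.snd ⁻¹' Iic s) ∩ (Prod.fst ⁻¹' Ici t))
        + π ((Prod.snd ⁻¹' Iic s) \ (Prod.fst ⁻¹' Ici t)) := measure_le_inter_add_diff _ _ _
    _ ≤ π {p : ℝ × ℝ | p.2 ≤ s ∧ t ≤ p.1} + π (Prod.fst ⁻¹' Iio t) := by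
        apply add_le_add
        · apply measure_mono
          rintro p ⟨h1, h2⟩
          exact ⟨h1, h2⟩
        · apply measure_mono
          rintro p ⟨_, h2⟩
          show p.1 < t
          exact lt_of_not_ge fun hc => h2 hc

lemma slice_bound (π : Measure (ℝ × ℝ)) [IsProbabilityMeasure π]
    (hfst : π.map Prod.fst = P) (hsnd : π.map Prod.snd = Q) (q : ℝ × ℝ) :
    (unif.map (fun x => (quantile P x, quantile Q x))) (sliceSet q) ≤ π (sliceSet q) := by
  have hpm : AEMeasurable (fun x => (quantile P x, quantile Q x)) unif :=
    (aemeasurable_quantile P).prodMk (aemeasurable_quantile Q)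
  by_cases hst : q.1 < q.2
  · -- main case
    rw [Measure.map_apply_of_aemeasurable hpm (measurable_sliceSet q)]
    have hpre : (fun x => (quantile P x, quantile Q x)) ⁻¹' sliceSet q
        = {x : ℝ | quantile P x ≤ q.1 ∧ q.2 ≤ quantile Q x}
          ∪ {x : ℝ | quantile Q x ≤ q.1 ∧ q.2 ≤ quantile P x} := by
      ext x
      simp only [mem_preimage, sliceSet, mem_setOf_eq, mem_union, hst, true_and]
      exact minmax_iff
    rw [hpre]
    have hsplit2 : sliceSet q = {p : ℝ × ℝ | p.1 ≤ q.1 ∧ q.2 ≤ p.2}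
        ∪ {p : ℝ × ℝ | p.2 ≤ q.1 ∧ q.2 ≤ p.1} := by
      ext p
      simp only [sliceSet, mem_setOf_eq, mem_union, hst, true_and]
      exact minmax_iff
    rw [hsplit2]
    have hmeas2 : MeasurableSet {p : ℝ × ℝ | p.2 ≤ q.1 ∧ q.2 ≤ p.1} :=
      (measurableSet_le measurable_snd measurable_const).inter
        (measurableSet_le measurable_const measurable_fst)
    have hdisj : Disjoint {p : ℝ × ℝ | p.1 ≤ q.1 ∧ q.2 ≤ p.2}
        {p : ℝ × ℝ | p.2 ≤ q.1 ∧ q.2 ≤ p.1} := by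
      rw [Set.disjoint_left]
      rintro p ⟨h1, h2⟩ ⟨h3, h4⟩
      linarith
    rw [measure_union hdisj hmeas2]
    calc unif ({x : ℝ | quantile P x ≤ q.1 ∧ q.2 ≤ quantile Q x}
          ∪ {x : ℝ | quantile Q x ≤ q.1 ∧ q.2 ≤ quantile P x})
        ≤ unif {x : ℝ | quantile P x ≤ q.1 ∧ q.2 ≤ quantile Q x}
          + unif {x : ℝ | quantile Q x ≤ q.1 ∧ q.2 ≤ quantile P x} := measure_union_le _ _
      _ ≤ (P (Iic q.1) - Q (Iio q.2)) + (Q (Iic q.1) - P (Iio q.2)) :=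
          add_le_add (unif_bound q.1 q.2) (unif_bound (P := Q) (Q := P) q.1 q.2)
      _ ≤ π {p : ℝ × ℝ | p.1 ≤ q.1 ∧ q.2 ≤ p.2} + π {p : ℝ × ℝ | p.2 ≤ q.1 ∧ q.2 ≤ p.1} :=
          add_le_add (coupling_bound π hfst hsnd q.1 q.2 hst)
            (coupling_bound' π hfst hsnd q.1 q.2 hst)
  · have : sliceSet q = ∅ := by
      ext p
      simp only [sliceSet, mem_setOf_eq, mem_empty_iff_false, iff_false]
      rintro ⟨_, h2, _⟩
      exact hst h2
    simp [this]

end part3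
/-- The infimum of `∫ (u-v)²/2 dπ` over all couplings `π` of `P` and `Q`
equals `∫₀¹ (F_P^←(x) - F_Q^←(x))²/2 dx` (half the squared 2-Wasserstein distance). -/
theorem stmt14 (P Q : Measure ℝ) [IsProbabilityMeasure P] [IsProbabilityMeasure Q] :
    sInf { I : ℝ≥0∞ | ∃ π : Measure (ℝ × ℝ), IsProbabilityMeasure π ∧
        π.map Prod.fst = P ∧ π.map Prod.snd = Q ∧
        I = ∫⁻ p, ENNReal.ofReal ((p.1 - p.2)^2 / 2) ∂π }
      = ∫⁻ x in Ioo (0:ℝ) 1, ENNReal.ofReal ((quantile P x - quantile Q x)^2 / 2) := by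
  have hpm : AEMeasurable (fun x => (quantile P x, quantile Q x)) unif :=
    (aemeasurable_quantile P).prodMk (aemeasurable_quantile Q)
  set π₀ := unif.map (fun x => (quantile P x, quantile Q x)) with hπ₀def
  have hπ₀ : IsProbabilityMeasure π₀ := Measure.isProbabilityMeasure_map hpm
  have hcost : Measurable (fun p : ℝ × ℝ => ENNReal.ofReal ((p.1 - p.2)^2 / 2)) :=
    ENNReal.measurable_ofReal.comp
      (((measurable_fst.sub measurable_snd).pow_const 2).div_const 2)
  have hfst₀ : π₀.map Prod.fst = P := by
    rw [hπ₀def, AEMeasurable.map_map_of_aemeasurable measurable_fst.aemeasurable hpm]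
    have : (Prod.fst ∘ fun x => (quantile P x, quantile Q x)) = quantile P := rfl
    rw [this]
    exact unif_map_quantile P
  have hsnd₀ : π₀.map Prod.snd = Q := by
    rw [hπ₀def, AEMeasurable.map_map_of_aemeasurable measurable_snd.aemeasurable hpm]
    have : (Prod.snd ∘ fun x => (quantile P x, quantile Q x)) = quantile Q := rfl
    rw [this]
    exact unif_map_quantile Q
  have hRHS : (∫⁻ x in Ioo (0:ℝ) 1, ENNReal.ofReal ((quantile P x - quantile Q x)^2 / 2))
      = ∫⁻ p, ENNReal.ofReal ((p.1 - p.2)^2 / 2) ∂π₀ := by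
    rw [hπ₀def, lintegral_map' hcost.aemeasurable hpm]
    rfl
  rw [hRHS]
  apply le_antisymm
  · exact sInf_le ⟨π₀, hπ₀, hfst₀, hsnd₀, rfl⟩
  · apply le_sInf
    rintro I ⟨π, hπ, hfst, hsnd, rfl⟩
    rw [lintegral_cost π₀, lintegral_cost π]
    exact lintegral_mono fun q => slice_bound π hfst hsnd q
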